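/- The Haar average ∫_{U(d)} dμ(U) U ⊗ U† equals T/d, where T = ∑_{j,k} |j⟩⟨k| ⊗ |k⟩⟨j| is the swap operator on ℂ^d ⊗ ℂ^d. -/

import Mathlib

open MeasureTheory Matrix
open scoped ComplexConjugate

section aux

variable {d : ℕ}

lemma haarAux_contEntry (a b : Fin d) :
    Continuous fun U : Matrix.unitaryGroup (Fin d) ℂ => (U : Matrix (Fin d) (Fin d) ℂ) a b :=
  (continuous_apply b).comp ((continuous_apply a).comp continuous_subtype_val)

lemma haarAux_row_sum (U : Matrix.unitaryGroup (Fin d) ℂ) (b b' : Fin d) :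
    ∑ m : Fin d, (U : Matrix (Fin d) (Fin d) ℂ) m b * conj ((U : Matrix (Fin d) (Fin d) ℂ) m b')
      = if b' = b then 1 else 0 := by
  have h := congrArg (fun M : Matrix (Fin d) (Fin d) ℂ => M b' b)
    (Matrix.UnitaryGroup.star_mul_self U)
  simpa [Matrix.mul_apply, Matrix.star_eq_conjTranspose, Matrix.conjTranspose_apply,
    Matrix.one_apply, mul_comm] using h

lemma haarAux_norm_le (U : Matrix.unitaryGroup (Fin d) ℂ) (a b : Fin d) :
    ‖(U : Matrix (Fin d) (Fin d) ℂ) a b‖ ≤ 1 := by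
  have h : ∑ m : Fin d, (U : Matrix (Fin d) (Fin d) ℂ) m b
      * conj ((U : Matrix (Fin d) (Fin d) ℂ) m b) = 1 := by
    simpa using haarAux_row_sum U b b
  have h' : ((∑ m : Fin d, Complex.normSq ((U : Matrix (Fin d) (Fin d) ℂ) m b) : ℝ) : ℂ)
      = ((1 : ℝ) : ℂ) := by
    push_cast
    rw [← h]
    exact Finset.sum_congr rfl fun m _ => Complex.normSq_eq_conj_mul_self.trans (mul_comm _ _)
  have h'' : ∑ m : Fin d, Complex.normSq ((U : Matrix (Fin d) (Fin d) ℂ) m b) = 1 := by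
    exact_mod_cast h'
  have hle : Complex.normSq ((U : Matrix (Fin d) (Fin d) ℂ) a b) ≤ 1 := by
    rw [← h'']
    exact Finset.single_le_sum
      (f := fun m => Complex.normSq ((U : Matrix (Fin d) (Fin d) ℂ) m b))
      (fun m _ => Complex.normSq_nonneg _) (Finset.mem_univ a)
  have h2 : ‖(U : Matrix (Fin d) (Fin d) ℂ) a b‖ ^ 2 ≤ 1 := by
    rwa [Complex.normSq_eq_norm_sq] at hle
  nlinarith [norm_nonneg ((U : Matrix (Fin d) (Fin d) ℂ) a b)]

end aux

/-- The Haar average `∫ U ⊗ U† dμ(U)` over `U(d)` equals `T/d`, where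
`T = ∑_{j,k} |j⟩⟨k| ⊗ |k⟩⟨j|` is the swap operator on `ℂ^d ⊗ ℂ^d`.  Entrywise:
the `((j,j'),(k,k'))` entry of `U ⊗ U†` is `U j k · conj (U k' j')` and that of `T/d`
is `(1/d) δ_{j k'} δ_{j' k}`. -/
theorem haar_average_U_tensor_Udag (d : ℕ) (hd : 0 < d)
    [MeasurableSpace (Matrix.unitaryGroup (Fin d) ℂ)]
    [BorelSpace (Matrix.unitaryGroup (Fin d) ℂ)]
    (μ : Measure (Matrix.unitaryGroup (Fin d) ℂ)) [μ.IsHaarMeasure] [IsProbabilityMeasure μ]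
    (j j' k k' : Fin d) :
    (∫ U, (U : Matrix (Fin d) (Fin d) ℂ) j k * conj ((U : Matrix (Fin d) (Fin d) ℂ) k' j') ∂μ)
      = if j = k' ∧ j' = k then ((d : ℂ))⁻¹ else 0 := by
  classical
  haveI : MeasurableMul (Matrix.unitaryGroup (Fin d) ℂ) := by
    constructor
    · intro c
      exact (continuous_mul_left c).measurable
    · intro c
      exact (continuous_mul_right c).measurable
  -- integrability
  have integr : ∀ a b a' b' : Fin d,
      Integrable (fun U : Matrix.unitaryGroup (Fin d) ℂ =>
        (U : Matrix (Fin d) (Fin d) ℂ) a b * conj ((U : Matrix (Fin d) (Fin d) ℂ) a' b')) μ := by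
    intro a b a' b'
    refine (integrable_const (1 : ℝ)).mono' ?_ (ae_of_all _ ?_)
    · exact ((haarAux_contEntry a b).mul
        (Complex.continuous_conj.comp (haarAux_contEntry a' b'))).aestronglyMeasurable
    · intro U
      rw [norm_mul]
      calc ‖(U : Matrix (Fin d) (Fin d) ℂ) a b‖ * ‖conj ((U : Matrix (Fin d) (Fin d) ℂ) a' b')‖
          ≤ 1 * 1 := by
            refine mul_le_mul ?_ ?_ (norm_nonneg _) zero_le_one
            · exact haarAux_norm_le U a b
            · rw [RCLike.norm_conj]; exact haarAux_norm_le U a' b'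
        _ = 1 := by ring
  -- left invariance
  have inv : ∀ (V : Matrix.unitaryGroup (Fin d) ℂ) (a b a' b' : Fin d),
      (∫ U : Matrix.unitaryGroup (Fin d) ℂ,
          ((V : Matrix (Fin d) (Fin d) ℂ) * U) a b * conj (((V : Matrix (Fin d) (Fin d) ℂ) * U) a' b') ∂μ)
        = ∫ U : Matrix.unitaryGroup (Fin d) ℂ,
            (U : Matrix (Fin d) (Fin d) ℂ) a b * conj ((U : Matrix (Fin d) (Fin d) ℂ) a' b') ∂μ := by
    intro V a b a' b'
    exact integral_mul_left_eq_self
      (fun U : Matrix.unitaryGroup (Fin d) ℂ =>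
        (U : Matrix (Fin d) (Fin d) ℂ) a b * conj ((U : Matrix (Fin d) (Fin d) ℂ) a' b')) V
  -- Step 1 : off-diagonal in rows vanishes
  have step1 : ∀ a b a' b' : Fin d, a ≠ a' →
      (∫ U : Matrix.unitaryGroup (Fin d) ℂ,
        (U : Matrix (Fin d) (Fin d) ℂ) a b * conj ((U : Matrix (Fin d) (Fin d) ℂ) a' b') ∂μ) = 0 := by
    intro a b a' b' hne
    set s : Fin d → ℂ := fun i => if i = a then -1 else 1 with hs
    have hVmem : Matrix.diagonal s ∈ Matrix.unitaryGroup (Fin d) ℂ := by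
      rw [Matrix.mem_unitaryGroup_iff]
      rw [Matrix.star_eq_conjTranspose, Matrix.diagonal_conjTranspose,
        Matrix.diagonal_mul_diagonal]
      simp only [Pi.star_apply]
      rw [show (fun i => s i * star (s i)) = fun _ => (1 : ℂ) from
        funext fun i => by by_cases hi : i = a <;> simp [hs, hi], Matrix.diagonal_one]
    have h := inv ⟨Matrix.diagonal s, hVmem⟩ a b a' b'
    have hint : ∀ U : Matrix.unitaryGroup (Fin d) ℂ,
        ((Matrix.diagonal s) * (U : Matrix (Fin d) (Fin d) ℂ)) a b
          * conj (((Matrix.diagonal s) * (U : Matrix (Fin d) (Fin d) ℂ)) a' b')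
        = -((U : Matrix (Fin d) (Fin d) ℂ) a b * conj ((U : Matrix (Fin d) (Fin d) ℂ) a' b')) := by
      intro U
      rw [Matrix.diagonal_mul, Matrix.diagonal_mul]
      have h1 : s a = -1 := by simp [hs]
      have h2 : s a' = 1 := by simp [hs, hne.symm]
      rw [h1, h2]
      simp
    rw [integral_congr_ae (ae_of_all _ hint), integral_neg] at h
    have h2 : (2 : ℂ) * (∫ U : Matrix.unitaryGroup (Fin d) ℂ,
        (U : Matrix (Fin d) (Fin d) ℂ) a b * conj ((U : Matrix (Fin d) (Fin d) ℂ) a' b') ∂μ) = 0 := by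
      linear_combination -h
    exact (mul_eq_zero.mp h2).resolve_left two_ne_zero
  -- Step 2 : diagonal entries independent of the row index
  have step2 : ∀ a1 a2 b b' : Fin d,
      (∫ U : Matrix.unitaryGroup (Fin d) ℂ,
        (U : Matrix (Fin d) (Fin d) ℂ) a1 b * conj ((U : Matrix (Fin d) (Fin d) ℂ) a1 b') ∂μ)
      = ∫ U : Matrix.unitaryGroup (Fin d) ℂ,
        (U : Matrix (Fin d) (Fin d) ℂ) a2 b * conj ((U : Matrix (Fin d) (Fin d) ℂ) a2 b') ∂μ := by
    intro a1 a2 b b'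
    set σ : Equiv.Perm (Fin d) := Equiv.swap a1 a2 with hσ
    have hVmem : σ.permMatrix ℂ ∈ Matrix.unitaryGroup (Fin d) ℂ := by
      rw [Matrix.mem_unitaryGroup_iff]
      have hstar : star (σ.permMatrix ℂ) = (σ⁻¹).permMatrix ℂ := by
        rw [Matrix.star_eq_conjTranspose]
        ext i jj
        simp only [Matrix.conjTranspose_apply, PEquiv.toMatrix_apply, Equiv.toPEquiv_apply,
          Option.mem_def, Option.some.injEq]
        by_cases hcond : σ jj = i
        · have : σ⁻¹ i = jj := by rw [← hcond]; simp
          simp [hcond, this]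
        · have : σ⁻¹ i ≠ jj := fun hh => hcond (by rw [← hh]; simp)
          simp [hcond]; exact this
      rw [hstar, ← PEquiv.toMatrix_trans, ← Equiv.toPEquiv_trans]
      have hrefl : σ.trans σ⁻¹ = Equiv.refl (Fin d) := by ext x; simp
      rw [hrefl, Equiv.toPEquiv_refl, PEquiv.toMatrix_refl]
    have h := inv ⟨σ.permMatrix ℂ, hVmem⟩ a1 b a1 b'
    have hint : ∀ U : Matrix.unitaryGroup (Fin d) ℂ,
        ((σ.permMatrix ℂ) * (U : Matrix (Fin d) (Fin d) ℂ)) a1 b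
          * conj (((σ.permMatrix ℂ) * (U : Matrix (Fin d) (Fin d) ℂ)) a1 b')
        = (U : Matrix (Fin d) (Fin d) ℂ) a2 b * conj ((U : Matrix (Fin d) (Fin d) ℂ) a2 b') := by
      intro U
      rw [PEquiv.toMatrix_toPEquiv_mul]
      simp [Matrix.submatrix_apply, hσ, Equiv.swap_apply_left]
    rw [integral_congr_ae (ae_of_all _ hint)] at h
    exact h.symm
  -- Step 3 : the trace identity
  have step3 : ∀ a b b' : Fin d,
      (d : ℂ) * (∫ U : Matrix.unitaryGroup (Fin d) ℂ,
        (U : Matrix (Fin d) (Fin d) ℂ) a b * conj ((U : Matrix (Fin d) (Fin d) ℂ) a b') ∂μ)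
      = if b' = b then 1 else 0 := by
    intro a b b'
    have hsum : (∑ m : Fin d, ∫ U : Matrix.unitaryGroup (Fin d) ℂ,
        (U : Matrix (Fin d) (Fin d) ℂ) m b * conj ((U : Matrix (Fin d) (Fin d) ℂ) m b') ∂μ)
        = if b' = b then 1 else 0 := by
      rw [← integral_finset_sum _ (fun m _ => integr m b m b')]
      rw [integral_congr_ae (ae_of_all _ (fun U => haarAux_row_sum U b b'))]
      simp
    calc (d : ℂ) * (∫ U : Matrix.unitaryGroup (Fin d) ℂ,
          (U : Matrix (Fin d) (Fin d) ℂ) a b * conj ((U : Matrix (Fin d) (Fin d) ℂ) a b') ∂μ)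
        = ∑ m : Fin d, ∫ U : Matrix.unitaryGroup (Fin d) ℂ,
            (U : Matrix (Fin d) (Fin d) ℂ) m b * conj ((U : Matrix (Fin d) (Fin d) ℂ) m b') ∂μ := by
          rw [Finset.sum_congr rfl (fun m _ => (step2 m a b b'))]
          simp [Finset.sum_const, mul_comm]
      _ = if b' = b then 1 else 0 := hsum
  have hdC : (d : ℂ) ≠ 0 := by
    exact_mod_cast Nat.cast_ne_zero.mpr hd.ne'
  by_cases h1 : j = k'
  · subst h1
    by_cases h2 : j' = k
    · subst h2
      rw [if_pos ⟨rfl, rfl⟩]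
      have h3 := step3 j j' j'
      rw [if_pos rfl] at h3
      field_simp
      linear_combination h3
    · rw [if_neg (by tauto)]
      have h3 := step3 j k j'
      rw [if_neg h2] at h3
      exact (mul_eq_zero.mp h3).resolve_left hdC
  · rw [if_neg (by tauto)]
    exact step1 j k k' j' h1
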